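/- Let A : Mₙ(ℂ) → Mₙ(ℂ) be a ℂ-linear map, let e_{ij} denote the standard matrix units, and define P := (1/n)·∑_{i,j=1}^{n} A(e_{ij}) ⊗ (e_{ji})ᵒᵖ ∈ Mₙ(ℂ) ⊗_ℂ Mₙ(ℂ)ᵒᵖ. Then P·P = P (P is idempotent in the tensor product algebra) if and only if for all indices i, l: (1/n)·∑_{j=1}^{n} A(e_{ij})·A(e_{jl}) = A(e_{il}). (The latter condition is exactly the quantum Schur idempotent condition m(A ⊗ A)m* = A defining a quantum adjacency matrix, where m is multiplication and m* its adjoint with respect to the inner product induced by τ = n·Tr.) -/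

import Mathlib

open scoped TensorProduct
open Matrix

noncomputable section ChoiAux

abbrev ChoiM (n : ℕ) := Matrix (Fin n) (Fin n) ℂ

/-- entry-extraction functional on the opposite algebra -/
def choiG (n : ℕ) (l i : Fin n) : (ChoiM n)ᵐᵒᵖ →ₗ[ℂ] ℂ where
  toFun b := b.unop l i
  map_add' _ _ := rfl
  map_smul' _ _ := rfl

def choiF (n : ℕ) (l i : Fin n) : ChoiM n ⊗[ℂ] (ChoiM n)ᵐᵒᵖ →ₗ[ℂ] ChoiM n :=
  (TensorProduct.rid ℂ (ChoiM n)).toLinearMap ∘ₗ LinearMap.lTensor (ChoiM n) (choiG n l i)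

@[simp] lemma choiF_tmul (n : ℕ) (l i : Fin n) (a : ChoiM n) (b : (ChoiM n)ᵐᵒᵖ) :
    choiF n l i (a ⊗ₜ b) = b.unop l i • a := rfl

lemma choi_tensor_sum_eq_iff (n : ℕ) (c d : Fin n → Fin n → ChoiM n) :
    (∑ i, ∑ l, c i l ⊗ₜ[ℂ] MulOpposite.op (Matrix.single l i (1:ℂ)))
      = ∑ i, ∑ l, d i l ⊗ₜ[ℂ] MulOpposite.op (Matrix.single l i (1:ℂ)) ↔
    ∀ i l, c i l = d i l := by
  constructor
  · intro h i l
    have := congrArg (choiF n l i) h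
    simp only [map_sum, choiF_tmul, MulOpposite.unop_op] at this
    have key : ∀ (e : Fin n → Fin n → ChoiM n),
        (∑ i', ∑ l', Matrix.single l' i' (1:ℂ) l i • e i' l') = e i l := by
      intro e
      rw [Finset.sum_eq_single i, Finset.sum_eq_single l]
      · simp
      · intro b _ hb
        simp [Matrix.single, hb, hb.symm]
      · simp
      · intro b _ hb
        apply Finset.sum_eq_zero
        intro l' _
        simp [Matrix.single, hb, hb.symm]
      · simp
    rw [key c, key d] at this
    exact this
  · intro h
    exact Finset.sum_congr rfl fun i _ => Finset.sum_congr rfl fun l _ => by rw [h]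

end ChoiAux

/-- The Choi-type element `P = (1/n) ∑_{i,j} A(e_{ij}) ⊗ (e_{ji})ᵒᵖ` is idempotent in
`Mₙ(ℂ) ⊗ Mₙ(ℂ)ᵒᵖ` iff `A` satisfies the quantum Schur idempotent condition
`(1/n) ∑_j A(e_{ij}) A(e_{jl}) = A(e_{il})` for all `i, l`. -/
theorem choi_idempotent_iff_schur_idempotent
    (n : ℕ) (A : Matrix (Fin n) (Fin n) ℂ →ₗ[ℂ] Matrix (Fin n) (Fin n) ℂ) :
    (let P : Matrix (Fin n) (Fin n) ℂ ⊗[ℂ] (Matrix (Fin n) (Fin n) ℂ)ᵐᵒᵖ :=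
      (n : ℂ)⁻¹ • ∑ i, ∑ j,
        A (Matrix.single i j 1) ⊗ₜ[ℂ] MulOpposite.op (Matrix.single j i 1)
     P * P = P) ↔
    (∀ i l : Fin n,
      (n : ℂ)⁻¹ • ∑ j, A (Matrix.single i j 1) * A (Matrix.single j l 1)
        = A (Matrix.single i l 1)) := by
  rcases Nat.eq_zero_or_pos n with hn | hn
  · subst hn
    simp
  have hn' : (n : ℂ)⁻¹ ≠ 0 := inv_ne_zero (Nat.cast_ne_zero.mpr hn.ne')
  set Q : Matrix (Fin n) (Fin n) ℂ ⊗[ℂ] (Matrix (Fin n) (Fin n) ℂ)ᵐᵒᵖ :=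
    ∑ i, ∑ j, A (Matrix.single i j 1) ⊗ₜ[ℂ]
      MulOpposite.op (Matrix.single j i 1) with hQ
  show ((n:ℂ)⁻¹ • Q) * ((n:ℂ)⁻¹ • Q) = (n:ℂ)⁻¹ • Q ↔ _
  have hQQ : Q * Q = ∑ i, ∑ l,
      (∑ j, A (Matrix.single i j 1) * A (Matrix.single j l 1)) ⊗ₜ[ℂ]
        MulOpposite.op (Matrix.single l i (1:ℂ)) := by
    have e1 : Q = ∑ p : Fin n × Fin n, A (Matrix.single p.1 p.2 1) ⊗ₜ[ℂ]
        MulOpposite.op (Matrix.single p.2 p.1 1) := by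
      rw [hQ, Fintype.sum_prod_type]
    rw [e1, Finset.sum_mul_sum]
    simp only [Algebra.TensorProduct.tmul_mul_tmul, ← MulOpposite.op_mul]
    rw [Fintype.sum_prod_type]
    refine Finset.sum_congr rfl fun i _ => ?_
    simp only [TensorProduct.sum_tmul]
    conv_rhs => rw [Finset.sum_comm]
    refine Finset.sum_congr rfl fun j _ => ?_
    rw [Fintype.sum_prod_type]
    rw [Finset.sum_eq_single j]
    · apply Finset.sum_congr rfl
      intro l _
      dsimp only
      rw [Matrix.single_mul_single_same]
      norm_num
    · intro k _ hk
      apply Finset.sum_eq_zero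
      intro l _
      dsimp only
      rw [Matrix.single_mul_single_of_ne (i := l) (j := k) (k := j) (h := hk) (d := 1)]
      simp
    · simp
  rw [smul_mul_assoc, mul_smul_comm, hQQ]
  have e2 : (n:ℂ)⁻¹ • ∑ i, ∑ l,
      (∑ j, A (Matrix.single i j 1) * A (Matrix.single j l 1)) ⊗ₜ[ℂ]
        MulOpposite.op (Matrix.single l i (1:ℂ))
      = ∑ i, ∑ l,
      ((n:ℂ)⁻¹ • ∑ j, A (Matrix.single i j 1) * A (Matrix.single j l 1)) ⊗ₜ[ℂ]
        MulOpposite.op (Matrix.single l i (1:ℂ)) := by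
    simp only [Finset.smul_sum, TensorProduct.smul_tmul']
  rw [e2, hQ]
  constructor
  · intro h
    exact (choi_tensor_sum_eq_iff n _ _).mp (smul_right_injective _ hn' h)
  · intro h
    congr 1
    exact (choi_tensor_sum_eq_iff n _ _).mpr h
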